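/- Let V : ℝ → ℝ be bounded and continuous, E real, a > 0, and let u solve −u″ + Vu = Eu on [0,a] with u(0) = 0, u′(0) = 1. Let θ : [0,a] → ℝ be a continuous function with θ(0) = 0 such that for every x ∈ [0,a], (u′(x), u(x)) = r(x)(cos θ(x), sin θ(x)) where r(x) = √(u(x)² + u′(x)²) > 0. If u has exactly m zeros in the open interval (0,a), then θ(a) ∈ (mπ, (m+1)π]; moreover θ(a) = (m+1)π exactly when u(a) = 0. -/

import Mathlib

open Set Real Filter Topology

lemma prufer_hasDeriv (a : ℝ) (u θ : ℝ → ℝ) (hu : ContDiff ℝ 2 u)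
    (hθc : ContinuousOn θ (Icc 0 a))
    (hr : ∀ x ∈ Icc 0 a, 0 < Real.sqrt ((u x) ^ 2 + (deriv u x) ^ 2))
    (hcos : ∀ x ∈ Icc 0 a,
      deriv u x = Real.sqrt ((u x) ^ 2 + (deriv u x) ^ 2) * Real.cos (θ x))
    (hsin : ∀ x ∈ Icc 0 a,
      u x = Real.sqrt ((u x) ^ 2 + (deriv u x) ^ 2) * Real.sin (θ x))
    (x₀ : ℝ) (hx₀ : x₀ ∈ Icc 0 a) (hu0 : u x₀ = 0) :
    HasDerivWithinAt θ 1 (Icc 0 a) x₀ := by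
  have hud : Differentiable ℝ u := hu.differentiable (by norm_num)
  have hu2 : ContDiff ℝ (1 + 1 : ℕ) u := by exact_mod_cast hu
  have hu'c : ContDiff ℝ 1 (deriv u) := (contDiff_succ_iff_deriv.mp hu2).2.2
  have hu'd : Differentiable ℝ (deriv u) := hu'c.differentiable (by norm_num)
  have hr0 : 0 < Real.sqrt ((u x₀) ^ 2 + (deriv u x₀) ^ 2) := hr x₀ hx₀
  have hrsq : Real.sqrt ((u x₀) ^ 2 + (deriv u x₀) ^ 2) ^ 2 = deriv u x₀ ^ 2 := by
    rw [Real.sq_sqrt (by positivity), hu0]; ring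
  have hu'sq : 0 < deriv u x₀ ^ 2 := by nlinarith [hr0, hrsq]
  have hu'0 : deriv u x₀ ≠ 0 := by
    intro h
    rw [h] at hu'sq
    norm_num at hu'sq
  set ε : ℝ := deriv u x₀ / Real.sqrt ((u x₀) ^ 2 + (deriv u x₀) ^ 2) with hεdef
  have hε2 : ε ^ 2 = 1 := by
    rw [hεdef, div_pow, hrsq, div_self (by positivity)]
  have hε : ε = 1 ∨ ε = -1 := by
    have h : (ε - 1) * (ε + 1) = 0 := by nlinarith
    rcases mul_eq_zero.mp h with h | h
    · left; linarith
    · right; linarith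
  have hεabs : |ε| = 1 := by rcases hε with h | h <;> rw [h] <;> norm_num
  have hεne : ε ≠ 0 := by rcases hε with h | h <;> rw [h] <;> norm_num
  have hcos0 : Real.cos (θ x₀) = ε := by
    rw [hεdef, eq_div_iff (ne_of_gt hr0), mul_comm]
    exact (hcos x₀ hx₀).symm
  have hsin0 : Real.sin (θ x₀) = 0 := by
    have h2 : Real.sqrt ((u x₀) ^ 2 + (deriv u x₀) ^ 2) * Real.sin (θ x₀) = 0 := by
      rw [← hsin x₀ hx₀]; exact hu0
    rcases mul_eq_zero.mp h2 with h' | h'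
    · exact absurd h' (ne_of_gt hr0)
    · exact h'
  -- derivative of g = u / r at x₀
  have hru : HasDerivAt u (deriv u x₀) x₀ := (hud x₀).hasDerivAt
  have hru' : HasDerivAt (deriv u) (deriv (deriv u) x₀) x₀ := (hu'd x₀).hasDerivAt
  have hsq : HasDerivAt (fun x => (u x) ^ 2 + (deriv u x) ^ 2)
      (2 * u x₀ ^ 1 * deriv u x₀ + 2 * deriv u x₀ ^ 1 * deriv (deriv u) x₀) x₀ := by
    have h1 := hru.fun_pow 2
    have h2 := hru'.fun_pow 2
    simpa using h1.fun_add h2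
  have hrd : HasDerivAt (fun x => Real.sqrt ((u x) ^ 2 + (deriv u x) ^ 2))
      ((2 * u x₀ ^ 1 * deriv u x₀ + 2 * deriv u x₀ ^ 1 * deriv (deriv u) x₀)
      / (2 * Real.sqrt ((u x₀) ^ 2 + (deriv u x₀) ^ 2))) x₀ :=
    hsq.sqrt (by nlinarith)
  have hg : HasDerivAt (fun x => u x / Real.sqrt ((u x) ^ 2 + (deriv u x) ^ 2)) ε x₀ := by
    have h := hru.fun_div hrd (ne_of_gt hr0)
    refine h.congr_deriv (Eq.symm ?_)
    have hne : Real.sqrt ((0:ℝ) ^ 2 + (deriv u x₀) ^ 2) ≠ 0 :=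
      ne_of_gt (Real.sqrt_pos.mpr (by nlinarith [hu'sq]))
    rw [hεdef, hu0]
    field_simp
    ring
  -- the eventual identity
  have hθx₀ : ContinuousWithinAt θ (Icc 0 a) x₀ := hθc x₀ hx₀
  have hev1 : ∀ᶠ x in 𝓝[Icc 0 a] x₀, |θ x - θ x₀| < π / 2 := by
    have h : {y : ℝ | |y - θ x₀| < π / 2} ∈ 𝓝 (θ x₀) := by
      have : Metric.ball (θ x₀) (π / 2) ∈ 𝓝 (θ x₀) := Metric.ball_mem_nhds _ (by positivity)
      simpa [Metric.ball, Real.dist_eq] using this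
    exact hθx₀ h
  have hev2 : ∀ᶠ x in 𝓝[Icc 0 a] x₀, deriv u x ≠ 0 :=
    ((hu'd.continuous.continuousAt.eventually_ne hu'0)).filter_mono nhdsWithin_le_nhds
  have hkey : θ =ᶠ[𝓝[Icc 0 a] x₀]
      fun x => θ x₀ + ε * Real.arcsin (u x / Real.sqrt ((u x) ^ 2 + (deriv u x) ^ 2)) := by
    filter_upwards [hev1, hev2, eventually_mem_nhdsWithin] with x h1 h2 hx
    have hrx : 0 < Real.sqrt ((u x) ^ 2 + (deriv u x) ^ 2) := hr x hx
    have h2' : 0 < deriv u x ^ 2 := by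
      have := abs_pos.mpr h2; nlinarith [sq_abs (deriv u x)]
    set d : ℝ := u x / Real.sqrt ((u x) ^ 2 + (deriv u x) ^ 2) with hd
    have habs : |d| < 1 := by
      rw [hd, abs_div, abs_of_pos hrx, div_lt_one hrx]
      have hlt : u x ^ 2 < Real.sqrt ((u x) ^ 2 + (deriv u x) ^ 2) ^ 2 := by
        rw [Real.sq_sqrt (by positivity)]; linarith
      nlinarith [abs_nonneg (u x), sq_abs (u x)]
    have habs' : -1 ≤ d := by have := (abs_lt.mp habs).1; linarith
    have habs'' : d ≤ 1 := by have := (abs_lt.mp habs).2; linarith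
    have hsinx : Real.sin (θ x) = d := by
      rw [hd, eq_div_iff (ne_of_gt hrx), mul_comm]
      exact (hsin x hx).symm
    set s₁ : ℝ := θ x - θ x₀ with hs₁def
    set s₂ : ℝ := ε * Real.arcsin d with hs₂def
    have hs₁ : s₁ ∈ Icc (-(π/2)) (π/2) := by
      constructor
      · linarith [(abs_lt.mp h1).1]
      · linarith [(abs_lt.mp h1).2]
    have harcabs : |Real.arcsin d| < π / 2 := by
      rw [abs_lt]
      exact ⟨Real.neg_pi_div_two_lt_arcsin.mpr (abs_lt.mp habs).1,
        Real.arcsin_lt_pi_div_two.mpr (abs_lt.mp habs).2⟩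
    have hs₂ : s₂ ∈ Icc (-(π/2)) (π/2) := by
      have habs2 : |s₂| < π / 2 := by rw [hs₂def, abs_mul, hεabs, one_mul]; exact harcabs
      constructor
      · linarith [(abs_lt.mp habs2).1]
      · linarith [(abs_lt.mp habs2).2]
    have hsin1 : Real.sin (θ x₀ + s₁) = d := by
      rw [show θ x₀ + s₁ = θ x by rw [hs₁def]; ring]
      exact hsinx
    have hsin2 : Real.sin (θ x₀ + s₂) = d := by
      rw [Real.sin_add, hsin0, hcos0, hs₂def]
      rcases hε with h | h <;>
        simp [h, Real.sin_arcsin habs' habs'']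
    have heq : s₁ = s₂ := by
      apply Real.injOn_sin hs₁ hs₂
      have e1 : Real.sin (θ x₀ + s₁) = ε * Real.sin s₁ := by
        rw [Real.sin_add, hsin0, hcos0]; ring
      have e2 : Real.sin (θ x₀ + s₂) = ε * Real.sin s₂ := by
        rw [Real.sin_add, hsin0, hcos0]; ring
      have h12 : ε * Real.sin s₁ = ε * Real.sin s₂ := by rw [← e1, ← e2, hsin1, hsin2]
      exact mul_left_cancel₀ hεne h12
    have hfin : θ x = θ x₀ + s₂ := by rw [← heq, hs₁def]; ring
    rw [hfin, hs₂def, hd]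
  -- derivative of the RHS
  have hg0 : u x₀ / Real.sqrt ((u x₀) ^ 2 + (deriv u x₀) ^ 2) = 0 := by rw [hu0]; simp
  have harc : HasDerivAt
      (fun x => θ x₀ + ε * Real.arcsin (u x / Real.sqrt ((u x) ^ 2 + (deriv u x) ^ 2)))
      (ε * (1 / Real.sqrt (1 - (u x₀ / Real.sqrt ((u x₀) ^ 2 + (deriv u x₀) ^ 2)) ^ 2) * ε))
      x₀ := by
    have h := (Real.hasDerivAt_arcsin (by rw [hg0]; norm_num) (by rw [hg0]; norm_num)).comp x₀ hg
    exact ((h.const_mul ε).const_add (θ x₀))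
  have hval : ε * (1 / Real.sqrt (1 - (u x₀ / Real.sqrt ((u x₀) ^ 2 + (deriv u x₀) ^ 2)) ^ 2) ^ 1 * ε)
      = 1 := by
    rw [hg0]
    norm_num
    nlinarith
  rw [pow_one] at hval
  rw [hval] at harc
  exact harc.hasDerivWithinAt.congr_of_eventuallyEq hkey (by simp [hg0])

lemma prufer_cross (a c : ℝ) (θ : ℝ → ℝ) (hθc : ContinuousOn θ (Icc 0 a))
    (hd : ∀ x ∈ Icc 0 a, θ x = c → HasDerivWithinAt θ 1 (Icc 0 a) x) :
    ∀ x₁ ∈ Icc 0 a, ∀ x₂ ∈ Icc 0 a, x₁ < x₂ → c ≤ θ x₁ → c < θ x₂ := by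
  -- from positive derivative at a point on level c: points strictly below c on the left,
  -- strictly above on the right
  have keyL : ∀ t ∈ Icc 0 a, θ t = c → ∀ y, 0 ≤ y → y < t → ∃ x ∈ Ioo y t, θ x < c := by
    intro t ht hθt y hy0 hyt
    have hders := hd t ht hθt
    rw [hasDerivWithinAt_iff_tendsto_slope] at hders
    have hpos : ∀ᶠ x in 𝓝[Icc 0 a \ {t}] t, 0 < slope θ t x :=
      hders.eventually (eventually_gt_nhds one_pos)
    have hsub : Ioo y t ⊆ Icc 0 a \ {t} := by
      intro x hx
      exact ⟨⟨by linarith [hx.1], by linarith [hx.2, ht.2]⟩, ne_of_lt hx.2⟩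
    have hne : (𝓝[Ioo y t] t).NeBot := by
      rw [← mem_closure_iff_nhdsWithin_neBot, closure_Ioo (ne_of_lt hyt)]
      exact ⟨le_of_lt hyt, le_refl t⟩
    obtain ⟨x, hx1, hx2⟩ :=
      ((hpos.filter_mono (nhdsWithin_mono t hsub)).and eventually_mem_nhdsWithin).exists
    refine ⟨x, hx2, ?_⟩
    rw [slope_def_field] at hx1
    have hxt : x - t < 0 := by linarith [hx2.2]
    rcases div_pos_iff.mp hx1 with ⟨h1, h2⟩ | ⟨h1, h2⟩
    · linarith
    · have : θ x - θ t < 0 := h1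
      linarith [hθt ▸ this]
  have keyR : ∀ t ∈ Icc 0 a, θ t = c → ∀ y, y ≤ a → t < y → ∃ x ∈ Ioo t y, c < θ x := by
    intro t ht hθt y hya hty
    have hders := hd t ht hθt
    rw [hasDerivWithinAt_iff_tendsto_slope] at hders
    have hpos : ∀ᶠ x in 𝓝[Icc 0 a \ {t}] t, 0 < slope θ t x :=
      hders.eventually (eventually_gt_nhds one_pos)
    have hsub : Ioo t y ⊆ Icc 0 a \ {t} := by
      intro x hx
      exact ⟨⟨by linarith [hx.1, ht.1], by linarith [hx.2]⟩, (ne_of_gt hx.1)⟩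
    have hne : (𝓝[Ioo t y] t).NeBot := by
      rw [← mem_closure_iff_nhdsWithin_neBot, closure_Ioo (ne_of_lt hty)]
      exact ⟨le_refl t, le_of_lt hty⟩
    obtain ⟨x, hx1, hx2⟩ :=
      ((hpos.filter_mono (nhdsWithin_mono t hsub)).and eventually_mem_nhdsWithin).exists
    refine ⟨x, hx2, ?_⟩
    rw [slope_def_field] at hx1
    have hxt : 0 < x - t := by linarith [hx2.1]
    rcases div_pos_iff.mp hx1 with ⟨h1, h2⟩ | ⟨h1, h2⟩
    · have : 0 < θ x - θ t := h1
      linarith [hθt ▸ this]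
    · linarith
  have strict : ∀ x₁ ∈ Icc 0 a, ∀ x₂ ∈ Icc 0 a, x₁ < x₂ → c < θ x₁ → c < θ x₂ := by
    intro x₁ h₁ x₂ h₂ hlt hgt
    by_contra hcon
    push_neg at hcon
    set K := {x | x ∈ Icc x₁ x₂ ∧ θ x ≤ c} with hK
    have hKcl : IsClosed K := by
      have hsub : Icc x₁ x₂ ⊆ Icc 0 a := Icc_subset_Icc h₁.1 h₂.2
      have : K = Icc x₁ x₂ ∩ θ ⁻¹' (Iic c) := by ext x; simp [hK, and_comm]
      rw [this]
      exact ContinuousOn.preimage_isClosed_of_isClosed (hθc.mono hsub) isClosed_Icc isClosed_Iic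
    have hKne : x₂ ∈ K := ⟨⟨le_of_lt hlt, le_refl x₂⟩, hcon⟩
    have hbdd : BddBelow K := ⟨x₁, fun x hx => hx.1.1⟩
    set t := sInf K with htdef
    have htK : t ∈ K := hKcl.csInf_mem ⟨x₂, hKne⟩ hbdd
    have htmem : t ∈ Icc 0 a := ⟨le_trans h₁.1 htK.1.1, le_trans htK.1.2 h₂.2⟩
    have hx₁t : x₁ < t := by
      rcases lt_or_eq_of_le htK.1.1 with h | h
      · exact h
      · exfalso; rw [← h] at htK; linarith [htK.2]
    have hlow : ∀ x ∈ Ico x₁ t, c < θ x := by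
      intro x hx
      by_contra hcx
      push_neg at hcx
      have hxK : x ∈ K := ⟨⟨hx.1, le_trans (le_of_lt hx.2) htK.1.2⟩, hcx⟩
      have := csInf_le hbdd hxK
      linarith [hx.2]
    have hθtge : c ≤ θ t := by
      have hcw : ContinuousWithinAt θ (Icc 0 a) t := hθc t htmem
      have hsub2 : Ico x₁ t ⊆ Icc 0 a := fun x hx =>
        ⟨le_trans h₁.1 hx.1, le_trans (le_of_lt hx.2) htmem.2⟩
      have htd : Tendsto θ (𝓝[Ico x₁ t] t) (𝓝 (θ t)) :=
        hcw.tendsto.comp (by exact tendsto_nhdsWithin_mono_left hsub2 tendsto_id)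
      have hneb : (𝓝[Ico x₁ t] t).NeBot := by
        rw [← mem_closure_iff_nhdsWithin_neBot, closure_Ico (ne_of_lt hx₁t)]
        exact ⟨le_of_lt hx₁t, le_refl t⟩
      exact ge_of_tendsto htd (eventually_mem_nhdsWithin.mono fun x hx => le_of_lt (hlow x hx))
    have hθt : θ t = c := le_antisymm htK.2 hθtge
    obtain ⟨x, hx, hxc⟩ := keyL t htmem hθt x₁ h₁.1 hx₁t
    exact absurd hxc (not_lt.mpr (le_of_lt (hlow x ⟨le_of_lt hx.1, hx.2⟩)))
  intro x₁ h₁ x₂ h₂ hlt hle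
  rcases eq_or_lt_of_le hle with heq | h
  · obtain ⟨y, hy, hcy⟩ := keyR x₁ h₁ heq.symm x₂ h₂.2 hlt
    have hymem : y ∈ Icc 0 a := ⟨le_trans h₁.1 (le_of_lt hy.1), le_trans (le_of_lt hy.2) h₂.2⟩
    exact strict y hymem x₂ h₂ hy.2 hcy
  · exact strict x₁ h₁ x₂ h₂ hlt h


/-- Let `u` solve `−u″ + Vu = Eu` on `[0,a]` with `u(0) = 0`, `u′(0) = 1`,
and let `θ` be a continuous argument of the never-vanishing curve `x ↦ (u′(x), u(x))` with
`θ(0) = 0`, i.e. `(u′(x), u(x)) = r(x)(cos θ(x), sin θ(x))` with `r(x) = √(u² + u′²) > 0`.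
If `u` has exactly `m` zeros in `(0,a)`, then `θ(a) ∈ (mπ, (m+1)π]`, and `θ(a) = (m+1)π`
exactly when `u(a) = 0`. -/
theorem prufer_angle_range (V : ℝ → ℝ) (hVb : ∃ M, ∀ x, |V x| ≤ M) (hVc : Continuous V)
    (E : ℝ) (a : ℝ) (ha : 0 < a) (u : ℝ → ℝ) (hu : ContDiff ℝ 2 u)
    (hode : ∀ x ∈ Icc 0 a, deriv (deriv u) x = (V x - E) * u x)
    (h0 : u 0 = 0) (h0' : deriv u 0 = 1)
    (θ : ℝ → ℝ) (hθc : ContinuousOn θ (Icc 0 a)) (hθ0 : θ 0 = 0)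
    (hr : ∀ x ∈ Icc 0 a, 0 < Real.sqrt ((u x) ^ 2 + (deriv u x) ^ 2))
    (hcos : ∀ x ∈ Icc 0 a,
      deriv u x = Real.sqrt ((u x) ^ 2 + (deriv u x) ^ 2) * Real.cos (θ x))
    (hsin : ∀ x ∈ Icc 0 a,
      u x = Real.sqrt ((u x) ^ 2 + (deriv u x) ^ 2) * Real.sin (θ x))
    (m : ℕ) (hm : {x ∈ Ioo 0 a | u x = 0}.Finite ∧ {x ∈ Ioo 0 a | u x = 0}.ncard = m) :
    θ a ∈ Ioc (m * π) ((m + 1) * π) ∧ (θ a = (m + 1) * π ↔ u a = 0) := by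
  classical
  obtain ⟨hfin, hcard⟩ := hm
  have hamem : a ∈ Icc 0 a := ⟨le_of_lt ha, le_refl a⟩
  have h0mem : (0:ℝ) ∈ Icc 0 a := ⟨le_refl 0, le_of_lt ha⟩
  have hzero : ∀ x ∈ Icc 0 a, (u x = 0 ↔ ∃ k : ℤ, θ x = k * π) := by
    intro x hx
    constructor
    · intro h
      have h2 : Real.sqrt ((u x) ^ 2 + (deriv u x) ^ 2) * Real.sin (θ x) = 0 := by
        rw [← hsin x hx]; exact h
      rcases mul_eq_zero.mp h2 with h' | h'
      · exact absurd h' (ne_of_gt (hr x hx))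
      · obtain ⟨k, hk⟩ := Real.sin_eq_zero_iff.mp h'
        exact ⟨k, hk.symm⟩
    · rintro ⟨k, hk⟩
      rw [hsin x hx, hk, Real.sin_int_mul_pi, mul_zero]
  have hcross : ∀ k : ℤ, ∀ x₁ ∈ Icc 0 a, ∀ x₂ ∈ Icc 0 a, x₁ < x₂ →
      (k:ℝ) * π ≤ θ x₁ → (k:ℝ) * π < θ x₂ := by
    intro k
    apply prufer_cross a ((k:ℝ) * π) θ hθc
    intro x hx hθx
    apply prufer_hasDeriv a u θ hu hθc hr hcos hsin x hx
    rw [hsin x hx, hθx, Real.sin_int_mul_pi, mul_zero]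
  have hpos : ∀ x ∈ Icc 0 a, 0 < x → 0 < θ x := by
    intro x hx hx0
    have h := hcross 0 0 h0mem x hx hx0 (by rw [hθ0]; norm_num)
    simpa using h
  have hzK : ∀ z ∈ {x ∈ Ioo 0 a | u x = 0}, ∃ k : ℤ, θ z = k * π ∧ 1 ≤ k := by
    intro z hz
    obtain ⟨hz1, hz2⟩ := hz
    have hzm : z ∈ Icc 0 a := ⟨le_of_lt hz1.1, le_of_lt hz1.2⟩
    obtain ⟨k, hk⟩ := (hzero z hzm).mp hz2
    refine ⟨k, hk, ?_⟩
    have hθz : 0 < θ z := hpos z hzm hz1.1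
    rw [hk] at hθz
    by_contra hcon
    push_neg at hcon
    have : (k:ℝ) ≤ 0 := by exact_mod_cast Int.lt_add_one_iff.mp (by exact_mod_cast hcon)
    nlinarith [Real.pi_pos]
  -- upper bound
  have hupper : θ a ≤ ((m:ℝ) + 1) * π := by
    by_contra hcon
    push_neg at hcon
    have hIVT : ∀ j : ℕ, j < m + 1 → ∃ t, t ∈ Ioo 0 a ∧ θ t = ((j:ℝ) + 1) * π ∧ u t = 0 := by
      intro j hj
      have hπ := Real.pi_pos
      have hv0 : (0:ℝ) < ((j:ℝ) + 1) * π := by positivity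
      have hva : ((j:ℝ) + 1) * π < θ a := by
        have hjm : ((j:ℝ) + 1) ≤ (m:ℝ) + 1 := by
          have : (j:ℝ) ≤ (m:ℝ) := by exact_mod_cast Nat.lt_succ_iff.mp hj
          linarith
        nlinarith
      have hmem : ((j:ℝ) + 1) * π ∈ Icc (θ 0) (θ a) := by
        rw [hθ0]; exact ⟨le_of_lt hv0, le_of_lt hva⟩
      obtain ⟨t, htmem, hθt⟩ := intermediate_value_Icc (le_of_lt ha) hθc hmem
      refine ⟨t, ⟨?_, ?_⟩, hθt, ?_⟩
      · rcases lt_or_eq_of_le htmem.1 with h | h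
        · exact h
        · exfalso; rw [← h, hθ0] at hθt; linarith
      · rcases lt_or_eq_of_le htmem.2 with h | h
        · exact h
        · exfalso; rw [h] at hθt; linarith
      · exact (hzero t htmem).mpr ⟨(j:ℤ) + 1, by rw [hθt]; push_cast; ring⟩
    choose! f hf using hIVT
    have hπ := Real.pi_pos
    have hinj : Set.InjOn f ↑(Finset.range (m + 1)) := by
      intro i hi j hj hij
      simp only [Finset.coe_range, Set.mem_Iio] at hi hj
      have h1 := (hf i hi).2.1
      have h2 := (hf j hj).2.1
      rw [hij, h2] at h1
      have : (i:ℝ) = (j:ℝ) := by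
        have := mul_right_cancel₀ (ne_of_gt hπ) h1
        linarith
      exact_mod_cast this
    have hmaps : ∀ j ∈ Finset.range (m + 1), f j ∈ hfin.toFinset := by
      intro j hj
      rw [Finset.mem_range] at hj
      rw [Set.Finite.mem_toFinset]
      exact ⟨(hf j hj).1, (hf j hj).2.2⟩
    have hle := Finset.card_le_card_of_injOn f hmaps hinj
    rw [Finset.card_range] at hle
    have hZc : hfin.toFinset.card = m := by
      rw [← Set.ncard_eq_toFinset_card _ hfin, hcard]
    omega
  -- lower bound
  have hlower : (m:ℝ) * π < θ a := by
    rcases Nat.eq_zero_or_pos m with hm0 | hm1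
    · rw [hm0]
      simpa using hpos a hamem ha
    · choose! κ hκ using hzK
      have hπ := Real.pi_pos
      have hinj : Set.InjOn κ {x ∈ Ioo 0 a | u x = 0} := by
        intro z hz w hw hzw
        by_contra hne
        have hzm : z ∈ Icc 0 a := ⟨le_of_lt hz.1.1, le_of_lt hz.1.2⟩
        have hwm : w ∈ Icc 0 a := ⟨le_of_lt hw.1.1, le_of_lt hw.1.2⟩
        have hθz := (hκ z hz).1
        have hθw := (hκ w hw).1
        rcases lt_or_gt_of_ne hne with h | h
        · have := hcross (κ z) z hzm w hwm h (le_of_eq hθz.symm)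
          rw [hθw, hzw] at this
          exact lt_irrefl _ this
        · have := hcross (κ w) w hwm z hzm h (le_of_eq hθw.symm)
          rw [hθz, hzw] at this
          exact lt_irrefl _ this
      have hZc : hfin.toFinset.card = m := by
        rw [← Set.ncard_eq_toFinset_card _ hfin, hcard]
      set S := hfin.toFinset.image κ with hS
      have hScard : S.card = m := by
        rw [hS, Finset.card_image_of_injOn (by rw [Set.Finite.coe_toFinset]; exact hinj), hZc]
      have hS1 : ∀ k ∈ S, 1 ≤ k := by
        intro k hk
        obtain ⟨z, hzF, hκz⟩ := Finset.mem_image.mp hk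
        rw [← hκz]
        exact (hκ z (hfin.mem_toFinset.mp hzF)).2
      have hex : ∃ k ∈ S, (m:ℤ) ≤ k := by
        by_contra hcon2
        push_neg at hcon2
        have hsub : S ⊆ Finset.Icc 1 ((m:ℤ) - 1) := by
          intro k hk
          rw [Finset.mem_Icc]
          exact ⟨hS1 k hk, by linarith [hcon2 k hk]⟩
        have hcc := Finset.card_le_card hsub
        rw [hScard, Int.card_Icc] at hcc
        omega
      obtain ⟨k, hkS, hkm⟩ := hex
      obtain ⟨z, hzF, hκz⟩ := Finset.mem_image.mp hkS
      have hzZ := hfin.mem_toFinset.mp hzF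
      have hzm : z ∈ Icc 0 a := ⟨le_of_lt hzZ.1.1, le_of_lt hzZ.1.2⟩
      have hθz : θ z = (k:ℝ) * π := by rw [← hκz]; exact (hκ z hzZ).1
      have hka := hcross k z hzm a hamem hzZ.1.2 (le_of_eq hθz.symm)
      have hcast : (m:ℝ) ≤ (k:ℝ) := by exact_mod_cast hkm
      nlinarith
  refine ⟨⟨hlower, hupper⟩, ?_, ?_⟩
  · intro h
    exact (hzero a hamem).mpr ⟨(m:ℤ) + 1, by rw [h]; push_cast; ring⟩
  · intro h
    obtain ⟨k, hk⟩ := (hzero a hamem).mp h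
    have hπ := Real.pi_pos
    have h1 : (m:ℝ) * π < (k:ℝ) * π := by rw [← hk]; exact hlower
    have h2 : (k:ℝ) * π ≤ ((m:ℝ) + 1) * π := by rw [← hk]; exact hupper
    have hk1 : (m:ℝ) < (k:ℝ) := by nlinarith
    have hk2 : (k:ℝ) ≤ (m:ℝ) + 1 := by nlinarith
    have hk1' : (m:ℤ) < k := by exact_mod_cast hk1
    have hk2' : k ≤ (m:ℤ) + 1 := by exact_mod_cast hk2
    have : k = (m:ℤ) + 1 := by omega
    rw [hk, this]
    push_cast
    ring
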